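/- There exists a unique minimal Markov basis (up to replacing moves z by −z) if and only if the set of all indispensable moves forms a Markov basis; and in this case every minimal Markov basis consists, up to sign, exactly of the indispensable moves. -/

import Mathlib

open scoped BigOperators

section Defs

variable {ι κ : Type*} [Fintype ι]

/-- Embed a frequency vector `x ∈ ℕ^ι` into `ℤ^ι`. -/
def natToInt (x : ι → ℕ) : ι → ℤ := fun i => (x i : ℤ)

/-- The fiber of `t`: all frequency vectors `x` with `A x = t`. -/
def fiberOf (A : Matrix κ ι ℤ) (t : κ → ℤ) : Set (ι → ℕ) :=
  {x | A.mulVec (natToInt x) = t}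

/-- A move for `A`: an integer vector in the kernel of `A`. -/
def IsMove (A : Matrix κ ι ℤ) (z : ι → ℤ) : Prop := A.mulVec z = 0

/-- The positive part `z⁺` of an integer vector, as a frequency vector. -/
def posOf (z : ι → ℤ) : ι → ℕ := fun i => (z i).toNat

/-- The negative part `z⁻` of an integer vector, as a frequency vector. -/
def negOf (z : ι → ℤ) : ι → ℕ := fun i => (-z i).toNat

/-- The degree of a move: `deg z = |z⁺|`. -/
def degOf (z : ι → ℤ) : ℕ := ∑ i, posOf z i

/-- One step: add or subtract one move of `B`, staying in `ℕ^ι`. -/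
def MStep (B : Set (ι → ℤ)) (x y : ι → ℕ) : Prop :=
  ∃ z ∈ B, natToInt y = natToInt x + z ∨ natToInt y = natToInt x - z

/-- `y` is accessible from `x` by the moves of `B` (staying nonnegative throughout,
since all intermediate points are frequency vectors). -/
def Accessible (B : Set (ι → ℤ)) : (ι → ℕ) → (ι → ℕ) → Prop :=
  Relation.ReflTransGen (MStep B)

/-- A Markov basis: a finite set of moves such that every fiber forms a single
equivalence class for mutual accessibility. -/
def IsMarkovBasis (A : Matrix κ ι ℤ) (B : Set (ι → ℤ)) : Prop :=
  B.Finite ∧ (∀ z ∈ B, IsMove A z) ∧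
    ∀ t : κ → ℤ, ∀ x ∈ fiberOf A t, ∀ y ∈ fiberOf A t, Accessible B x y

/-- A minimal Markov basis: no proper subset is a Markov basis. -/
def IsMinimalMarkovBasis (A : Matrix κ ι ℤ) (B : Set (ι → ℤ)) : Prop :=
  IsMarkovBasis A B ∧ ∀ B' ⊂ B, ¬ IsMarkovBasis A B'

/-- An indispensable monomial: every Markov basis contains a move whose
positive or negative part is `x`. -/
def IsIndispensableMonomial (A : Matrix κ ι ℤ) (x : ι → ℕ) : Prop :=
  ∀ B : Set (ι → ℤ), IsMarkovBasis A B → ∃ z ∈ B, posOf z = x ∨ negOf z = x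

/-- `B_n`: the set of moves of degree at most `n`. -/
def Bmoves (A : Matrix κ ι ℤ) (n : ℕ) : Set (ι → ℤ) :=
  {z | IsMove A z ∧ degOf z ≤ n}

/-- The sample size `|t|` of a sufficient statistic `t` (well defined on nonempty
fibers under homogeneity). -/
noncomputable def sampleSize (A : Matrix κ ι ℤ) (t : κ → ℤ) : ℕ :=
  sInf {n | ∃ x ∈ fiberOf A t, ∑ i, x i = n}

/-- The `B_{|t|-1}`-equivalence classes of the fiber of `t`. -/
noncomputable def fiberClasses (A : Matrix κ ι ℤ) (t : κ → ℤ) : Set (Set (ι → ℕ)) :=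
  {C | ∃ x ∈ fiberOf A t,
    C = {y | y ∈ fiberOf A t ∧ Accessible (Bmoves A (sampleSize A t - 1)) x y}}

/-- Homogeneity: some rational vector `w` has `w ⬝ aᵢ = 1` for every column `aᵢ`. -/
def IsHomogeneousMatrix [Fintype κ] (A : Matrix κ ι ℤ) : Prop :=
  ∃ w : κ → ℚ, ∀ i : ι, ∑ j, w j * (A j i : ℚ) = 1

end Defs

/-- An indispensable move: a nonzero move whose fiber consists exactly of its positive
and negative parts. -/
def IsIndispensableMove {p d : ℕ} (A : Matrix (Fin d) (Fin p) ℤ) (z : Fin p → ℤ) : Prop :=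
  IsMove A z ∧ z ≠ 0 ∧
    fiberOf A (A.mulVec (natToInt (posOf z))) = {posOf z, negOf z}

/-- Two sets of moves coincide up to replacing moves `z` by `-z`. -/
def EqUpToSign {ι : Type*} (B₁ B₂ : Set (ι → ℤ)) : Prop :=
  (∀ z ∈ B₁, z ∈ B₂ ∨ -z ∈ B₂) ∧ (∀ z ∈ B₂, z ∈ B₁ ∨ -z ∈ B₁)

/- ============ auxiliary lemmas ============ -/

section MBAux

variable {p d : ℕ} {A : Matrix (Fin d) (Fin p) ℤ}

lemma natToInt_inj : Function.Injective (natToInt (ι := Fin p)) := by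
  intro x y h
  funext i
  have := congrFun h i
  simpa [natToInt] using this

lemma natToInt_posOf_sub_negOf (z : Fin p → ℤ) :
    natToInt (posOf z) - natToInt (negOf z) = z := by
  funext i
  simp only [natToInt, posOf, negOf, Pi.sub_apply]
  omega

lemma posOf_ne_negOf {z : Fin p → ℤ} (hz : z ≠ 0) : posOf z ≠ negOf z := by
  intro h
  apply hz
  have := natToInt_posOf_sub_negOf z
  rw [h, sub_self] at this
  exact this.symm

lemma negOf_mem_fiber (hz : IsMove A z) :
    negOf z ∈ fiberOf A (A.mulVec (natToInt (posOf z))) := by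
  show A.mulVec (natToInt (negOf z)) = _
  have h : natToInt (negOf z) = natToInt (posOf z) - z := by
    funext i
    simp only [natToInt, negOf, posOf, Pi.sub_apply]
    omega
  rw [h, Matrix.mulVec_sub, hz, sub_zero]

lemma mstep_sim {B₁ B₂ : Set (Fin p → ℤ)} (h : ∀ z ∈ B₁, z ∈ B₂ ∨ -z ∈ B₂)
    {x y : Fin p → ℕ} (hs : MStep B₁ x y) : MStep B₂ x y := by
  obtain ⟨z, hzB, hz⟩ := hs
  rcases h z hzB with h' | h'
  · exact ⟨z, h', hz⟩
  · refine ⟨-z, h', ?_⟩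
    rcases hz with hz | hz
    · exact Or.inr (by rw [hz]; abel)
    · exact Or.inl (by rw [hz]; abel)

lemma accessible_of_mstep {B₁ B₂ : Set (Fin p → ℤ)}
    (h : ∀ x y : Fin p → ℕ, MStep B₁ x y → Accessible B₂ x y)
    {x y : Fin p → ℕ} (hxy : Accessible B₁ x y) : Accessible B₂ x y := by
  induction hxy with
  | refl => exact Relation.ReflTransGen.refl
  | tail _ hstep ih => exact ih.trans (h _ _ hstep)

lemma accessible_sim {B₁ B₂ : Set (Fin p → ℤ)} (h : ∀ z ∈ B₁, z ∈ B₂ ∨ -z ∈ B₂)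
    {x y : Fin p → ℕ} (hxy : Accessible B₁ x y) : Accessible B₂ x y :=
  accessible_of_mstep (fun _ _ hs => Relation.ReflTransGen.single (mstep_sim h hs)) hxy

/-- Fact 1: every indispensable move is, up to sign, in every Markov basis. -/
lemma indispensable_mem_basis {z : Fin p → ℤ} (hz : IsIndispensableMove A z)
    {B : Set (Fin p → ℤ)} (hB : IsMarkovBasis A B) : z ∈ B ∨ -z ∈ B := by
  obtain ⟨hmove, hz0, hfib⟩ := hz
  set t := A.mulVec (natToInt (posOf z)) with ht
  have hpf : posOf z ∈ fiberOf A t := rfl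
  have hnf : negOf z ∈ fiberOf A t := negOf_mem_fiber hmove
  have hne : posOf z ≠ negOf z := posOf_ne_negOf hz0
  have hacc : Accessible B (posOf z) (negOf z) := hB.2.2 t _ hpf _ hnf
  -- auxiliary: difference of two distinct fiber elements is ±z
  have hdiff : ∀ a c : Fin p → ℕ, a ∈ fiberOf A t → c ∈ fiberOf A t → a ≠ c →
      natToInt c - natToInt a = z ∨ natToInt c - natToInt a = -z := by
    intro a c haf hcf hac
    rw [hfib] at haf hcf
    rcases haf with ha | ha <;> rcases hcf with hc | hc
    · exact absurd (ha.trans hc.symm) hac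
    · subst ha; subst hc
      right
      funext i
      simp only [natToInt, negOf, posOf, Pi.sub_apply, Pi.neg_apply]
      omega
    · subst ha; subst hc
      left
      funext i
      simp only [natToInt, negOf, posOf, Pi.sub_apply]
      omega
    · exact absurd (ha.trans hc.symm) hac
  have key : ∀ a : Fin p → ℕ, Accessible B a (negOf z) → a ∈ fiberOf A t →
      a ≠ negOf z → z ∈ B ∨ -z ∈ B := by
    intro a hrel
    refine Relation.ReflTransGen.head_induction_on hrel (fun _ h => absurd rfl h) ?_
    intro a' c' hstep htail ih haf hay
    obtain ⟨w, hwB, hw⟩ := hstep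
    have hwm : IsMove A w := hB.2.1 w hwB
    have hcf : c' ∈ fiberOf A t := by
      rcases hw with h | h
      · show A.mulVec (natToInt c') = t
        rw [h, Matrix.mulVec_add, hwm, add_zero]; exact haf
      · show A.mulVec (natToInt c') = t
        rw [h, Matrix.mulVec_sub, hwm, sub_zero]; exact haf
    by_cases hac : a' = c'
    · exact ih hcf (hac ▸ hay)
    · have hd := hdiff a' c' haf hcf hac
      rcases hw with h | h
      · have hwd : w = natToInt c' - natToInt a' := by rw [h]; abel
        rcases hd with hd | hd
        · exact Or.inl (by rwa [hwd, hd] at hwB)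
        · exact Or.inr (by rwa [hwd, hd] at hwB)
      · have hwd : w = -(natToInt c' - natToInt a') := by rw [h]; abel
        rcases hd with hd | hd
        · exact Or.inr (by rwa [hwd, hd] at hwB)
        · exact Or.inl (by rwa [hwd, hd, neg_neg] at hwB)
  exact key _ hacc hpf hne

/-- homogeneity: all elements of a fiber have the same sample size -/
lemma sum_fiber_eq (hA : IsHomogeneousMatrix A) {t : Fin d → ℤ} {x y : Fin p → ℕ}
    (hx : x ∈ fiberOf A t) (hy : y ∈ fiberOf A t) : ∑ i, x i = ∑ i, y i := by
  obtain ⟨w, hw⟩ := hA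
  have key : ∀ u : Fin p → ℕ, u ∈ fiberOf A t →
      ((∑ i, u i : ℕ) : ℚ) = ∑ j, w j * (t j : ℚ) := by
    intro u hu
    have hu' : ∀ j, (∑ i, A j i * (u i : ℤ)) = t j := by
      intro j
      have := congrFun hu j
      simpa [Matrix.mulVec, dotProduct, natToInt] using this
    push_cast
    calc ∑ i, (u i : ℚ)
        = ∑ i, (u i : ℚ) * ∑ j, w j * (A j i : ℚ) := by
          refine Finset.sum_congr rfl fun i _ => ?_
          rw [hw i, mul_one]
      _ = ∑ i, ∑ j, w j * ((A j i : ℚ) * u i) := by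
          refine Finset.sum_congr rfl fun i _ => ?_
          rw [Finset.mul_sum]
          exact Finset.sum_congr rfl fun j _ => by ring
      _ = ∑ j, ∑ i, w j * ((A j i : ℚ) * u i) := Finset.sum_comm
      _ = ∑ j, w j * (t j : ℚ) := by
          refine Finset.sum_congr rfl fun j _ => ?_
          rw [← Finset.mul_sum]
          congr 1
          rw [← hu' j]
          push_cast
          ring
  exact_mod_cast (key x hx).trans (key y hy).symm

lemma nonneg_move_eq_zero (hA : IsHomogeneousMatrix A) {b : Fin p → ℤ}
    (hbm : IsMove A b) (hnn : ∀ i, 0 ≤ b i) : b = 0 := by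
  have hpf : posOf b ∈ fiberOf A (A.mulVec (natToInt (posOf b))) := rfl
  have hnf : negOf b ∈ fiberOf A (A.mulVec (natToInt (posOf b))) := negOf_mem_fiber hbm
  have hs := sum_fiber_eq hA hpf hnf
  have hnz : ∑ i, negOf b i = 0 := by
    refine Finset.sum_eq_zero fun i _ => ?_
    have := hnn i
    simp only [negOf]
    omega
  rw [hnz] at hs
  have hpz : ∀ i ∈ Finset.univ, posOf b i = 0 := Finset.sum_eq_zero_iff.mp hs
  funext i
  have h1 := hpz i (Finset.mem_univ i)
  have h2 := hnn i
  simp only [posOf] at h1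
  simp only [Pi.zero_apply]
  omega

lemma nonpos_move_eq_zero (hA : IsHomogeneousMatrix A) {b : Fin p → ℤ}
    (hbm : IsMove A b) (hnp : ∀ i, b i ≤ 0) : b = 0 := by
  have hm : IsMove A (-b) := by
    show A.mulVec (-b) = 0
    have : (-b) = 0 - b := by abel
    rw [this, Matrix.mulVec_sub, hbm, Matrix.mulVec_zero, sub_zero]
  have := nonneg_move_eq_zero hA hm (fun i => by simpa using hnp i)
  have h0 : b = -(-b) := by abel
  rw [h0, this]
  simp

lemma exists_minimal_subset {B : Set (Fin p → ℤ)} (hB : IsMarkovBasis A B) :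
    ∃ B' ⊆ B, IsMinimalMarkovBasis A B' := by
  classical
  have H : ∀ n : ℕ, ∀ B : Set (Fin p → ℤ), B.ncard = n → IsMarkovBasis A B →
      ∃ B' ⊆ B, IsMinimalMarkovBasis A B' := by
    intro n
    induction n using Nat.strong_induction_on with
    | _ n ih =>
      intro B hcard hMB
      by_cases h : ∃ B'' ⊂ B, IsMarkovBasis A B''
      · obtain ⟨B'', hsub, hMB''⟩ := h
        have hlt : B''.ncard < n := hcard ▸ Set.ncard_lt_ncard hsub hMB.1
        obtain ⟨B', h1, h2⟩ := ih _ hlt B'' rfl hMB''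
        exact ⟨B', h1.trans hsub.subset, h2⟩
      · push_neg at h
        exact ⟨B, le_refl _, hMB, h⟩
  exact H B.ncard B rfl hB

lemma zero_not_mem_of_minimal {B : Set (Fin p → ℤ)}
    (hB : IsMinimalMarkovBasis A B) : (0 : Fin p → ℤ) ∉ B := by
  intro h0
  refine hB.2 (B \ {0}) (Set.sdiff_singleton_ssubset.mpr h0) ?_
  refine ⟨hB.1.1.diff, fun z hz => hB.1.2.1 z hz.1, ?_⟩
  intro t x hx y hy
  refine accessible_of_mstep (fun a b hs => ?_) (hB.1.2.2 t x hx y hy)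
  obtain ⟨w, hwB, hw⟩ := hs
  by_cases hw0 : w = 0
  · subst hw0
    have heq : natToInt b = natToInt a := by
      rcases hw with h | h <;> simpa using h
    rw [natToInt_inj heq]
    exact Relation.ReflTransGen.refl
  · exact Relation.ReflTransGen.single ⟨w, ⟨hwB, hw0⟩, hw⟩

lemma not_mem_both_signs {B : Set (Fin p → ℤ)} (hB : IsMinimalMarkovBasis A B)
    {b : Fin p → ℤ} (hb : b ∈ B) (hnb : -b ∈ B) : False := by
  have hb0 : b ≠ 0 := by
    intro h; exact zero_not_mem_of_minimal hB (h ▸ hb)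
  have hbne : -b ≠ b := by
    intro h
    apply hb0
    funext i
    have := congrFun h i
    simp only [Pi.neg_apply, Pi.zero_apply] at this ⊢
    omega
  refine hB.2 (B \ {b}) (Set.sdiff_singleton_ssubset.mpr hb) ?_
  refine ⟨hB.1.1.diff, fun z hz => hB.1.2.1 z hz.1, ?_⟩
  intro t x hx y hy
  refine accessible_sim (fun z hz => ?_) (hB.1.2.2 t x hx y hy)
  by_cases hzb : z = b
  · subst hzb
    exact Or.inr ⟨hnb, hbne⟩
  · exact Or.inl ⟨hz, hzb⟩

lemma neg_indispensable {z : Fin p → ℤ} (hz : IsIndispensableMove A z) :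
    IsIndispensableMove A (-z) := by
  obtain ⟨hmove, hz0, hfib⟩ := hz
  have hmn : IsMove A (-z) := by
    show A.mulVec (-z) = 0
    have : (-z) = 0 - z := by abel
    rw [this, Matrix.mulVec_sub, hmove, Matrix.mulVec_zero, sub_zero]
  have hpn : posOf (-z) = negOf z := by funext i; simp [posOf, negOf]
  have hnn : negOf (-z) = posOf z := by
    funext i; simp only [posOf, negOf, Pi.neg_apply, neg_neg]
  refine ⟨hmn, fun h => hz0 ?_, ?_⟩
  · funext i
    have := congrFun h i
    simp only [Pi.neg_apply, Pi.zero_apply] at this ⊢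
    omega
  · rw [hpn, hnn]
    have hAeq : A.mulVec (natToInt (negOf z)) = A.mulVec (natToInt (posOf z)) :=
      negOf_mem_fiber hmove
    rw [hAeq, hfib, Set.pair_comm]

end MBAux

section Lex

def LexPos {p : ℕ} (z : Fin p → ℤ) : Prop := ∃ i, 0 < z i ∧ ∀ j < i, z j = 0

lemma lexPos_or_neg {p : ℕ} {z : Fin p → ℤ} (hz : z ≠ 0) : LexPos z ∨ LexPos (-z) := by
  have hne : ∃ i, z i ≠ 0 := by
    by_contra h; push_neg at h; exact hz (funext fun i => h i)
  classical
  let s : Finset (Fin p) := Finset.univ.filter (fun i => z i ≠ 0)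
  have hs : s.Nonempty := by
    obtain ⟨i, hi⟩ := hne
    exact ⟨i, by simp [s, hi]⟩
  set i₀ := s.min' hs with hi₀
  have hmem : z i₀ ≠ 0 := by
    have := s.min'_mem hs
    simpa [s] using this
  have hlt : ∀ j < i₀, z j = 0 := by
    intro j hj
    by_contra hjz
    have : i₀ ≤ j := s.min'_le j (by simp [s, hjz])
    exact absurd hj (not_lt.mpr this)
  rcases lt_or_gt_of_ne hmem with h | h
  · exact Or.inr ⟨i₀, by simpa using h, fun j hj => by simp [hlt j hj]⟩
  · exact Or.inl ⟨i₀, h, hlt⟩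

lemma not_lexPos_both {p : ℕ} {z : Fin p → ℤ} (h1 : LexPos z) (h2 : LexPos (-z)) : False := by
  obtain ⟨i, hi, hil⟩ := h1
  obtain ⟨i', hi', hil'⟩ := h2
  simp only [Pi.neg_apply] at hi' hil'
  rcases lt_trichotomy i i' with h | h | h
  · have := hil' i h; omega
  · subst h; omega
  · have := hil i' h; omega

end Lex

section MBAux2

variable {p d : ℕ} {A : Matrix (Fin d) (Fin p) ℤ}

/-- Replacing a non-indispensable move `b` by the two "detour" moves through a third
fiber element `x₀` still gives a Markov basis. -/
lemma swap_basis {B : Set (Fin p → ℤ)} (hB : IsMarkovBasis A B) {b : Fin p → ℤ}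
    (hbm : IsMove A b) {x₀ : Fin p → ℕ}
    (hx₀ : x₀ ∈ fiberOf A (A.mulVec (natToInt (posOf b)))) :
    IsMarkovBasis A ((B \ {b}) ∪
      {natToInt x₀ - natToInt (posOf b), natToInt x₀ - natToInt (negOf b)}) := by
  set u := natToInt x₀ - natToInt (posOf b) with hu
  set v := natToInt x₀ - natToInt (negOf b) with hv
  have hnegfib : A.mulVec (natToInt (negOf b)) = A.mulVec (natToInt (posOf b)) :=
    negOf_mem_fiber hbm
  refine ⟨(hB.1.diff).union ((Set.finite_singleton _).insert _), ?_, ?_⟩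
  · rintro z (hz | hz)
    · exact hB.2.1 z hz.1
    · rcases hz with hz | hz
      · subst hz
        show A.mulVec u = 0
        rw [hu, Matrix.mulVec_sub, hx₀, sub_self]
      · rw [Set.mem_singleton_iff] at hz
        subst hz
        show A.mulVec v = 0
        rw [hv, Matrix.mulVec_sub, hnegfib, hx₀, sub_self]
  · intro t x hx y hy
    refine accessible_of_mstep (fun a c hs => ?_) (hB.2.2 t x hx y hy)
    obtain ⟨w, hwB, hw⟩ := hs
    by_cases hwb : w = b
    · subst hwb
      rcases hw with h | h
      · -- c = a + b : go a → a - b⁻ + x₀ → c  (via +v then -u)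
        have hge : ∀ i, negOf w i ≤ a i := by
          intro i
          have h1 := congrFun h i
          simp only [natToInt, Pi.add_apply] at h1
          simp only [negOf]
          omega
        refine Relation.ReflTransGen.head
          (b := fun i => (a i - negOf w i) + x₀ i) ⟨v, ?_, Or.inl ?_⟩
          (Relation.ReflTransGen.single ⟨u, ?_, Or.inr ?_⟩)
        · exact Or.inr (Set.mem_insert_of_mem _ rfl)
        · funext i
          have h2 := hge i
          simp only [negOf] at h2
          simp only [natToInt, hv, Pi.add_apply, Pi.sub_apply, negOf]
          omega
        · exact Or.inr (Set.mem_insert _ _)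
        · funext i
          have h1 := congrFun h i
          have h2 := hge i
          simp only [natToInt, Pi.add_apply] at h1
          simp only [natToInt, hu, Pi.sub_apply, posOf, negOf] at h1 ⊢
          omega
      · -- c = a - b : go a → a - b⁺ + x₀ → c  (via +u then -v)
        have hge : ∀ i, posOf w i ≤ a i := by
          intro i
          have h1 := congrFun h i
          simp only [natToInt, Pi.sub_apply] at h1
          simp only [posOf]
          omega
        refine Relation.ReflTransGen.head
          (b := fun i => (a i - posOf w i) + x₀ i) ⟨u, ?_, Or.inl ?_⟩
          (Relation.ReflTransGen.single ⟨v, ?_, Or.inr ?_⟩)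
        · exact Or.inr (Set.mem_insert _ _)
        · funext i
          have h2 := hge i
          simp only [posOf] at h2
          simp only [natToInt, hu, Pi.add_apply, Pi.sub_apply, posOf]
          omega
        · exact Or.inr (Set.mem_insert_of_mem _ rfl)
        · funext i
          have h1 := congrFun h i
          have h2 := hge i
          simp only [natToInt, Pi.sub_apply] at h1
          simp only [natToInt, hv, Pi.sub_apply, posOf, negOf] at h1 ⊢
          omega
    · exact Relation.ReflTransGen.single ⟨w, Or.inl ⟨hwB, hwb⟩, hw⟩

/-- If the indispensable moves form a Markov basis, every minimal Markov basis consists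
of indispensable moves. -/
lemma minimal_subset_indisp
    (hD : IsMarkovBasis A {z | IsIndispensableMove A z})
    {B : Set (Fin p → ℤ)} (hB : IsMinimalMarkovBasis A B) :
    B ⊆ {z | IsIndispensableMove A z} := by
  set D : Set (Fin p → ℤ) := {z | IsIndispensableMove A z} with hDdef
  have hBD : IsMarkovBasis A (B ∩ D) := by
    refine ⟨hB.1.1.subset Set.inter_subset_left,
      fun z hz => hB.1.2.1 z hz.1, ?_⟩
    intro t x hx y hy
    refine accessible_sim (fun z hzD => ?_) (hD.2.2 t x hx y hy)
    rcases indispensable_mem_basis hzD hB.1 with hmem | hmem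
    · exact Or.inl (Set.mem_inter hmem hzD)
    · exact Or.inr (Set.mem_inter hmem (neg_indispensable hzD))
  have hsub : B ∩ D ⊆ B := Set.inter_subset_left
  by_contra hnsub
  have : B ∩ D ⊂ B := by
    refine hsub.ssubset_of_ne fun h => hnsub ?_
    intro z hz
    rw [← h] at hz
    exact hz.2
  exact hB.2 _ this hBD

end MBAux2

/-- there is a unique (up to sign) minimal Markov basis iff the set of
indispensable moves is a Markov basis; and then every minimal Markov basis consists,
up to sign, exactly of the indispensable moves. -/
theorem unique_minimal_MarkovBasis_iff_indispensable
    {p d : ℕ} (hp : 0 < p) (hd : 0 < d)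
    (A : Matrix (Fin d) (Fin p) ℤ) (hA : IsHomogeneousMatrix A) :
    ((∃ B : Set (Fin p → ℤ), IsMinimalMarkovBasis A B ∧
        ∀ B' : Set (Fin p → ℤ), IsMinimalMarkovBasis A B' → EqUpToSign B B') ↔
      IsMarkovBasis A {z | IsIndispensableMove A z}) ∧
    (IsMarkovBasis A {z | IsIndispensableMove A z} →
      ∀ B : Set (Fin p → ℤ), IsMinimalMarkovBasis A B →
        EqUpToSign B {z | IsIndispensableMove A z}) := by
  classical
  have part2 : IsMarkovBasis A {z | IsIndispensableMove A z} →
      ∀ B, IsMinimalMarkovBasis A B → EqUpToSign B {z | IsIndispensableMove A z} := by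
    intro hD B hB
    constructor
    · intro z hz
      exact Or.inl (minimal_subset_indisp hD hB hz)
    · intro z hz
      exact indispensable_mem_basis hz hB.1
  refine ⟨⟨?_, ?_⟩, part2⟩
  · -- forward direction
    rintro ⟨B, hBmin, huniq⟩
    have hBD : B ⊆ {z | IsIndispensableMove A z} := by
      intro b hb
      by_contra hbD
      have hmove : IsMove A b := hBmin.1.2.1 b hb
      have hb0 : b ≠ 0 := fun h => zero_not_mem_of_minimal hBmin (h ▸ hb)
      have hfibne : fiberOf A (A.mulVec (natToInt (posOf b))) ≠ {posOf b, negOf b} :=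
        fun h => hbD ⟨hmove, hb0, h⟩
      have hsub : ({posOf b, negOf b} : Set (Fin p → ℕ)) ⊆
          fiberOf A (A.mulVec (natToInt (posOf b))) := by
        intro x hx
        rcases Set.mem_insert_iff.mp hx with h | h
        · subst h; exact rfl
        · rw [Set.mem_singleton_iff] at h; subst h; exact negOf_mem_fiber hmove
      obtain ⟨x₀, hx₀f, hx₀⟩ : ∃ x₀ ∈ fiberOf A (A.mulVec (natToInt (posOf b))),
          x₀ ∉ ({posOf b, negOf b} : Set (Fin p → ℕ)) := by
        by_contra hcon
        push_neg at hcon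
        exact hfibne (Set.Subset.antisymm hcon hsub)
      set u := natToInt x₀ - natToInt (posOf b) with hu
      set v := natToInt x₀ - natToInt (negOf b) with hv
      have hB'' := swap_basis hBmin.1 hmove hx₀f
      obtain ⟨B', hB'sub, hB'min⟩ := exists_minimal_subset hB''
      have heq := (huniq B' hB'min).1 b hb
      have hnb : -b ∉ B := fun h => not_mem_both_signs hBmin hb h
      have hune_b : u ≠ b := by
        intro h
        have hnn : ∀ i, 0 ≤ b i := by
          intro i
          have h1 := congrFun h i
          have h2 : (0:ℤ) ≤ natToInt x₀ i := Int.ofNat_nonneg _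
          simp only [hu, natToInt, Pi.sub_apply, posOf] at h1 h2
          omega
        exact hb0 (nonneg_move_eq_zero hA hmove hnn)
      have hune_nb : u ≠ -b := by
        intro h
        have hx0eq : x₀ = negOf b := by
          funext i
          have h1 := congrFun h i
          simp only [hu, natToInt, Pi.sub_apply, Pi.neg_apply, posOf] at h1
          simp only [negOf]
          omega
        exact hx₀ (by rw [hx0eq]; exact Set.mem_insert_iff.mpr (Or.inr rfl))
      have hvne_b : v ≠ b := by
        intro h
        have hx0eq : x₀ = posOf b := by
          funext i
          have h1 := congrFun h i
          simp only [hv, natToInt, Pi.sub_apply, negOf] at h1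
          simp only [posOf]
          omega
        exact hx₀ (by rw [hx0eq]; exact Set.mem_insert _ _)
      have hvne_nb : v ≠ -b := by
        intro h
        have hnp : ∀ i, b i ≤ 0 := by
          intro i
          have h1 := congrFun h i
          have h2 : (0:ℤ) ≤ natToInt x₀ i := Int.ofNat_nonneg _
          simp only [hv, natToInt, Pi.sub_apply, Pi.neg_apply, negOf] at h1 h2
          omega
        exact hb0 (nonpos_move_eq_zero hA hmove hnp)
      rcases heq with h | h
      · rcases hB'sub h with h' | h'
        · exact h'.2 rfl
        · rcases Set.mem_insert_iff.mp h' with h' | h'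
          · exact hune_b h'.symm
          · rw [Set.mem_singleton_iff] at h'; exact hvne_b h'.symm
      · rcases hB'sub h with h' | h'
        · exact hnb h'.1
        · rcases Set.mem_insert_iff.mp h' with h' | h'
          · exact hune_nb h'.symm
          · rw [Set.mem_singleton_iff] at h'; exact hvne_nb h'.symm
    have hDfin : Set.Finite {z | IsIndispensableMove A z} := by
      have hss : {z | IsIndispensableMove A z} ⊆ B ∪ (Neg.neg '' B) := by
        intro z hz
        rcases indispensable_mem_basis hz hBmin.1 with h | h
        · exact Or.inl h
        · exact Or.inr ⟨-z, h, by simp⟩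
      exact (hBmin.1.1.union (hBmin.1.1.image _)).subset hss
    refine ⟨hDfin, fun z hz => hz.1, ?_⟩
    intro t x hx y hy
    exact accessible_sim (fun z hz => Or.inl (hBD hz)) (hBmin.1.2.2 t x hx y hy)
  · -- backward direction
    intro hD
    set S : Set (Fin p → ℤ) := {z | IsIndispensableMove A z ∧ LexPos z} with hSdef
    have hSD : S ⊆ {z | IsIndispensableMove A z} := fun z hz => hz.1
    have hsel : ∀ z ∈ {z | IsIndispensableMove A z}, z ∈ S ∨ -z ∈ S := by
      intro z hz
      rcases lexPos_or_neg hz.2.1 with h | h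
      · exact Or.inl ⟨hz, h⟩
      · exact Or.inr ⟨neg_indispensable hz, h⟩
    have hSMB : IsMarkovBasis A S := by
      refine ⟨hD.1.subset hSD, fun z hz => (hSD hz).1, ?_⟩
      intro t x hx y hy
      exact accessible_sim hsel (hD.2.2 t x hx y hy)
    have hSmin : IsMinimalMarkovBasis A S := by
      refine ⟨hSMB, fun B₀ hB₀ hMB₀ => ?_⟩
      obtain ⟨z, hzS, hzB₀⟩ := Set.exists_of_ssubset hB₀
      rcases indispensable_mem_basis (hSD hzS) hMB₀ with h | h
      · exact hzB₀ h
      · exact not_lexPos_both hzS.2 ((hB₀.subset h).2)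
    refine ⟨S, hSmin, ?_⟩
    intro B' hB'
    constructor
    · intro z hz
      exact indispensable_mem_basis (hSD hz) hB'.1
    · intro z hz
      exact hsel z (minimal_subset_indisp hD hB' hz)
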